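/- Let G be a finite group acting on a finite set X, U = Z[X], and A = ker(U → Z) the augmentation kernel. Then the G-equivariant map ρ: Sym²U → U defined by ρ(xx') = x + x' for x, x' ∈ X has kernel exactly Sym²A (viewed as a sublattice of Sym²U) and image ε⁻¹(2Z), yielding an exact sequence of G-modules 0 → Sym²A → Z[P₂(X)] → A/2A → 0. -/

import Mathlib

open Function

section Core
variable (G : Type) [Group G]

/-- A map is `G`-equivariant. -/
def IsEquivMapP {M N : Type} [AddCommGroup M] [AddCommGroup N]
    [DistribMulAction G M] [DistribMulAction G N] (f : M → N) : Prop :=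
  ∀ (g : G) (m : M), f (g • m) = g • f m

/-- `M` is a permutation `G`-lattice: it has a finite `ℤ`-basis permuted by `G`. -/
def IsPermLat (M : Type) [AddCommGroup M] [DistribMulAction G M] : Prop :=
  ∃ (ι : Type) (_ : Fintype ι) (b : Module.Basis ι ℤ M) (σ : G → ι → ι),
    ∀ (g : G) (i : ι), g • (b i : M) = b (σ g i)

/-- `M` is a lattice: finitely generated and free over `ℤ`. -/
def IsLat (M : Type) [AddCommGroup M] : Prop := Module.Free ℤ M ∧ Module.Finite ℤ M

/-- A short exact sequence `0 → M → E → P → 0` of `G`-modules. -/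
def ShortExactG (M E P : Type) [AddCommGroup M] [AddCommGroup E] [AddCommGroup P]
    [DistribMulAction G M] [DistribMulAction G E] [DistribMulAction G P] : Prop :=
  ∃ (i : M →+ E) (p : E →+ P), IsEquivMapP G i ∧ IsEquivMapP G p ∧
    Injective i ∧ Surjective p ∧ i.range = p.ker

/-- Colliot-Thélène–Sansuc equivalence of `G`-lattices. -/
def LatEquiv (M N : Type) [AddCommGroup M] [AddCommGroup N]
    [DistribMulAction G M] [DistribMulAction G N] : Prop :=
  ∃ (E : Type) (_ : AddCommGroup E) (_ : DistribMulAction G E)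
    (P : Type) (_ : AddCommGroup P) (_ : DistribMulAction G P)
    (Q : Type) (_ : AddCommGroup Q) (_ : DistribMulAction G Q),
    IsLat E ∧ IsPermLat G P ∧ IsPermLat G Q ∧
    ShortExactG G M E P ∧ ShortExactG G N E Q

/-- `M` is stably permutation. -/
def IsStablyPerm (M : Type) [AddCommGroup M] [DistribMulAction G M] : Prop :=
  ∃ (P : Type) (_ : AddCommGroup P) (_ : DistribMulAction G P)
    (Q : Type) (_ : AddCommGroup Q) (_ : DistribMulAction G Q),
    IsPermLat G P ∧ IsPermLat G Q ∧
    ∃ e : (M × P) ≃+ Q, IsEquivMapP G e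

/-- `M` is permutation projective: a direct summand of a permutation lattice. -/
def IsPermProj (M : Type) [AddCommGroup M] [DistribMulAction G M] : Prop :=
  ∃ (P : Type) (_ : AddCommGroup P) (_ : DistribMulAction G P), IsPermLat G P ∧
    ∃ (i : M →+ P) (r : P →+ M), IsEquivMapP G i ∧ IsEquivMapP G r ∧ ∀ m, r (i m) = m

/-- `M` is quasi-permutation: it embeds into a permutation lattice with permutation quotient. -/
def IsQuasiPerm (M : Type) [AddCommGroup M] [DistribMulAction G M] : Prop :=
  ∃ (P : Type) (_ : AddCommGroup P) (_ : DistribMulAction G P)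
    (Q : Type) (_ : AddCommGroup Q) (_ : DistribMulAction G Q),
    IsPermLat G P ∧ IsPermLat G Q ∧ ShortExactG G M P Q

variable (M : Type) [AddCommGroup M] [DistribMulAction G M]

/-- 1-cocycles. -/
def Z1 : AddSubgroup (G → M) where
  carrier := {f | ∀ g h : G, f (g * h) = g • f h + f g}
  zero_mem' := by intro g h; simp
  add_mem' := by
    intro f f' hf hf' g h
    simp only [Pi.add_apply, hf g h, hf' g h, smul_add]; abel
  neg_mem' := by
    intro f hf g h
    simp only [Pi.neg_apply, hf g h, smul_neg]; abel

/-- The coboundary homomorphism. -/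
def coboundHom : M →+ Z1 G M where
  toFun m := ⟨fun g => g • m - m, by intro g h; simp only [mul_smul, smul_sub]; abel⟩
  map_zero' := by apply Subtype.ext; funext g; simp
  map_add' := by
    intro a b; apply Subtype.ext; funext g
    show g • (a + b) - (a + b) = (g • a - a) + (g • b - b)
    simp only [smul_add]; abel

/-- 1-coboundaries. -/
def B1 : AddSubgroup (Z1 G M) := (coboundHom G M).range

/-- First group cohomology `H¹(G, M)`. -/
abbrev H1 := Z1 G M ⧸ B1 G M

/-- Restriction of cocycles to a subgroup. -/
def resZ1 (H : Subgroup G) : Z1 G M →+ Z1 H M where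
  toFun f := ⟨fun h => f.1 h, by
    intro a b
    have := f.2 (a : G) (b : G)
    exact this⟩
  map_zero' := rfl
  map_add' := fun _ _ => rfl

/-- Restriction on `H¹`. -/
def resH1 (H : Subgroup G) : H1 G M →+ H1 H M :=
  QuotientAddGroup.map _ _ (resZ1 G M H) (by
    rintro _ ⟨m, rfl⟩
    exact ⟨m, Subtype.ext rfl⟩)

/-- `Ш¹(G, M)`. -/
def Sha1 : AddSubgroup (H1 G M) :=
  ⨅ g : G, (resH1 G M (Subgroup.zpowers g)).ker

/-- `M` is coflasque: `H¹(H, M) = 0` for all subgroups `H ≤ G`. -/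
def IsCoflasque : Prop := ∀ H : Subgroup G, ∀ x y : H1 H M, x = y

end Core

section Core2
variable (G : Type) [Group G] (M : Type) [AddCommGroup M] [DistribMulAction G M]

/-- 2-cocycles. -/
def Z2 : AddSubgroup (G → G → M) where
  carrier := {f | ∀ g h k : G, g • f h k - f (g * h) k + f g (h * k) - f g h = 0}
  zero_mem' := by intro g h k; simp
  add_mem' := by
    intro f f' hf hf' g h k
    have h1 := hf g h k; have h2 := hf' g h k
    simp only [Pi.add_apply, smul_add]
    calc g • f h k + g • f' h k - (f (g * h) k + f' (g * h) k) +
          (f g (h * k) + f' g (h * k)) - (f g h + f' g h)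
        = (g • f h k - f (g * h) k + f g (h * k) - f g h) +
          (g • f' h k - f' (g * h) k + f' g (h * k) - f' g h) := by abel
      _ = 0 := by rw [h1, h2, add_zero]
  neg_mem' := by
    intro f hf g h k
    have h1 := hf g h k
    simp only [Pi.neg_apply, smul_neg]
    calc -(g • f h k) - -f (g * h) k + -f g (h * k) - -f g h
        = -(g • f h k - f (g * h) k + f g (h * k) - f g h) := by abel
      _ = 0 := by rw [h1, neg_zero]

/-- The 2-coboundary homomorphism. -/
def cobound2Hom : (G → M) →+ Z2 G M where
  toFun u := ⟨fun g h => g • u h - u (g * h) + u g, by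
    intro g h k
    simp only [mul_smul, smul_sub, smul_add, mul_assoc]
    abel⟩
  map_zero' := by apply Subtype.ext; funext g h; simp
  map_add' := by
    intro a b; apply Subtype.ext; funext g h
    show g • (a h + b h) - (a (g * h) + b (g * h)) + (a g + b g)
        = (g • a h - a (g * h) + a g) + (g • b h - b (g * h) + b g)
    simp only [smul_add]; abel

/-- 2-coboundaries. -/
def B2 : AddSubgroup (Z2 G M) := (cobound2Hom G M).range

/-- Second group cohomology `H²(G, M)`. -/
abbrev H2 := Z2 G M ⧸ B2 G M

/-- Restriction of 2-cocycles to a subgroup. -/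
def resZ2 (H : Subgroup G) : Z2 G M →+ Z2 H M where
  toFun f := ⟨fun a b => f.1 a b, by
    intro a b c
    have := f.2 (a : G) (b : G) (c : G)
    exact this⟩
  map_zero' := rfl
  map_add' := fun _ _ => rfl

/-- Restriction on `H²`. -/
def resH2 (H : Subgroup G) : H2 G M →+ H2 H M :=
  QuotientAddGroup.map _ _ (resZ2 G M H) (by
    rintro _ ⟨u, rfl⟩
    exact ⟨fun h : H => u (h : G), Subtype.ext rfl⟩)

/-- `Ш²(G, M)`. -/
def Sha2 : AddSubgroup (H2 G M) :=
  ⨅ g : G, (resH2 G M (Subgroup.zpowers g)).ker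

/-- The subgroup `2M`. -/
def twoSub : AddSubgroup M :=
  (AddMonoidHom.mk' (fun m : M => (2 : ℤ) • m) (by
    intro a b
    show (2 : ℤ) • (a + b) = (2 : ℤ) • a + (2 : ℤ) • b
    rw [smul_add])).range

/-- `M/2M`. -/
abbrev ModTwo := M ⧸ twoSub M

noncomputable instance : SMul G (ModTwo M) :=
  ⟨fun g => QuotientAddGroup.map _ _ (DistribMulAction.toAddMonoidHom M g) (by
    rintro _ ⟨m, rfl⟩
    refine ⟨g • m, ?_⟩
    show (2 : ℤ) • (g • m) = g • ((2 : ℤ) • m)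
    rw [smul_comm])⟩

theorem modTwo_smul_mk (g : G) (m : M) :
    g • (QuotientAddGroup.mk m : ModTwo M) = QuotientAddGroup.mk (g • m) := rfl

noncomputable instance : DistribMulAction G (ModTwo M) where
  one_smul x := by
    obtain ⟨m, rfl⟩ := QuotientAddGroup.mk_surjective x
    rw [modTwo_smul_mk, one_smul]
  mul_smul g h x := by
    obtain ⟨m, rfl⟩ := QuotientAddGroup.mk_surjective x
    rw [modTwo_smul_mk, modTwo_smul_mk, modTwo_smul_mk, mul_smul]
  smul_zero g := map_zero (QuotientAddGroup.map _ _ (DistribMulAction.toAddMonoidHom M g) _)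
  smul_add g x y := map_add (QuotientAddGroup.map _ _ (DistribMulAction.toAddMonoidHom M g) _) x y

variable [Finite G]

/-- Kernel of the norm map (for a finite group). -/
def normKer : AddSubgroup M where
  carrier := {x | ∑ᶠ g : G, g • x = 0}
  zero_mem' := by simp
  add_mem' := by
    intro x y hx hy
    have hx' : ∑ᶠ g : G, g • x = 0 := hx
    have hy' : ∑ᶠ g : G, g • y = 0 := hy
    show ∑ᶠ g : G, g • (x + y) = 0
    simp only [smul_add]
    rw [finsum_add_distrib (Set.toFinite _) (Set.toFinite _), hx', hy', add_zero]
  neg_mem' := by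
    intro x hx
    have hx' : ∑ᶠ g : G, g • x = 0 := hx
    show ∑ᶠ g : G, g • (-x) = 0
    simp only [smul_neg]
    rw [finsum_neg_distrib, hx', neg_zero]

/-- The subgroup generated by elements `g • m - m`. -/
def augSub : AddSubgroup M := AddSubgroup.closure {x | ∃ (g : G) (m : M), x = g • m - m}

/-- Tate cohomology `Ĥ⁻¹(G, M)` (for a finite group `G`). -/
abbrev TateNeg1 := normKer G M ⧸ ((augSub G M).addSubgroupOf (normKer G M))

/-- `M` is flasque: `Ĥ⁻¹(H, M) = 0` for all subgroups `H ≤ G`. -/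
def IsFlasque : Prop := ∀ H : Subgroup G, ∀ x y : TateNeg1 H M, x = y

end Core2

section Core3
variable (G : Type) [Group G]

/-- `M` is equivalent to a direct summand of a quasi-permutation `G`-lattice. -/
def IsEquivSummandQP (M : Type) [AddCommGroup M] [DistribMulAction G M] : Prop :=
  ∃ (S : Type) (_ : AddCommGroup S) (_ : DistribMulAction G S)
    (D : Type) (_ : AddCommGroup D) (_ : DistribMulAction G D)
    (D' : Type) (_ : AddCommGroup D') (_ : DistribMulAction G D'),
    IsLat S ∧ IsQuasiPerm G S ∧ (∃ e : (D × D') ≃+ S, IsEquivMapP G e) ∧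
    LatEquiv G M D

end Core3

section Tensor
open TensorProduct
variable (G : Type) [Group G] (M : Type) [AddCommGroup M] [DistribMulAction G M]

/-- The action of `g : G` as a `ℤ`-linear map. -/
def gLin (g : G) : M →ₗ[ℤ] M := (DistribMulAction.toAddMonoidHom M g).toIntLinearMap

noncomputable instance tensorSMul : SMul G (M ⊗[ℤ] M) :=
  ⟨fun g => TensorProduct.map (gLin G M g) (gLin G M g)⟩

theorem tsmul_def (g : G) (x : M ⊗[ℤ] M) :
    g • x = TensorProduct.map (gLin G M g) (gLin G M g) x := rfl

theorem gLin_one : gLin G M 1 = LinearMap.id := by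
  ext m; show (1 : G) • m = m; rw [one_smul]

theorem gLin_mul (g h : G) : gLin G M (g * h) = (gLin G M g).comp (gLin G M h) := by
  ext m; show (g * h) • m = g • h • m; rw [mul_smul]

noncomputable instance tensorAct : DistribMulAction G (M ⊗[ℤ] M) where
  one_smul x := by rw [tsmul_def, gLin_one, TensorProduct.map_id]; rfl
  mul_smul g h x := by
    rw [tsmul_def, tsmul_def, tsmul_def, gLin_mul, TensorProduct.map_comp]; rfl
  smul_zero g := map_zero _
  smul_add g x y := map_add _ x y

/-- Generators of the symmetric relation. -/
def symSpan : Submodule ℤ (M ⊗[ℤ] M) :=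
  Submodule.span ℤ {x | ∃ a b : M, x = a ⊗ₜ[ℤ] b - b ⊗ₜ[ℤ] a}

/-- Generators of the wedge relation. -/
def wedSpan : Submodule ℤ (M ⊗[ℤ] M) :=
  Submodule.span ℤ {x | ∃ a : M, x = a ⊗ₜ[ℤ] a}

/-- The second symmetric power `Sym²M`. -/
abbrev Sym2Q := (M ⊗[ℤ] M) ⧸ symSpan M

/-- The second exterior power `∧²M`. -/
abbrev Wedge2Q := (M ⊗[ℤ] M) ⧸ wedSpan M

theorem symSpan_le_comap (g : G) :
    symSpan M ≤ (symSpan M).comap (TensorProduct.map (gLin G M g) (gLin G M g)) := by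
  refine Submodule.span_le.2 ?_
  rintro _ ⟨a, b, rfl⟩
  show TensorProduct.map (gLin G M g) (gLin G M g) (a ⊗ₜ[ℤ] b - b ⊗ₜ[ℤ] a) ∈ symSpan M
  rw [map_sub, TensorProduct.map_tmul, TensorProduct.map_tmul]
  exact Submodule.subset_span ⟨gLin G M g a, gLin G M g b, rfl⟩

theorem wedSpan_le_comap (g : G) :
    wedSpan M ≤ (wedSpan M).comap (TensorProduct.map (gLin G M g) (gLin G M g)) := by
  refine Submodule.span_le.2 ?_
  rintro _ ⟨a, rfl⟩
  show TensorProduct.map (gLin G M g) (gLin G M g) (a ⊗ₜ[ℤ] a) ∈ wedSpan M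
  rw [TensorProduct.map_tmul]
  exact Submodule.subset_span ⟨gLin G M g a, rfl⟩

noncomputable instance sym2SMul : SMul G (Sym2Q M) :=
  ⟨fun g => Submodule.mapQ _ _ (TensorProduct.map (gLin G M g) (gLin G M g))
    (symSpan_le_comap G M g)⟩

noncomputable instance wedge2SMul : SMul G (Wedge2Q M) :=
  ⟨fun g => Submodule.mapQ _ _ (TensorProduct.map (gLin G M g) (gLin G M g))
    (wedSpan_le_comap G M g)⟩

theorem sym2_smul_mk (g : G) (x : M ⊗[ℤ] M) :
    g • ((symSpan M).mkQ x) = (symSpan M).mkQ (g • x) :=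
  Submodule.mapQ_apply _ _ _ _

theorem wedge2_smul_mk (g : G) (x : M ⊗[ℤ] M) :
    g • ((wedSpan M).mkQ x) = (wedSpan M).mkQ (g • x) :=
  Submodule.mapQ_apply _ _ _ _

noncomputable instance sym2Act : DistribMulAction G (Sym2Q M) where
  one_smul x := by
    obtain ⟨y, rfl⟩ := (symSpan M).mkQ_surjective x
    rw [sym2_smul_mk, one_smul]
  mul_smul g h x := by
    obtain ⟨y, rfl⟩ := (symSpan M).mkQ_surjective x
    rw [sym2_smul_mk, sym2_smul_mk, sym2_smul_mk, mul_smul]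
  smul_zero g := by
    have h := sym2_smul_mk G M g 0
    rwa [smul_zero, map_zero] at h
  smul_add g x y := by
    obtain ⟨a, rfl⟩ := (symSpan M).mkQ_surjective x
    obtain ⟨b, rfl⟩ := (symSpan M).mkQ_surjective y
    rw [← map_add (symSpan M).mkQ a b, sym2_smul_mk, sym2_smul_mk, sym2_smul_mk, smul_add, map_add]

noncomputable instance wedge2Act : DistribMulAction G (Wedge2Q M) where
  one_smul x := by
    obtain ⟨y, rfl⟩ := (wedSpan M).mkQ_surjective x
    rw [wedge2_smul_mk, one_smul]
  mul_smul g h x := by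
    obtain ⟨y, rfl⟩ := (wedSpan M).mkQ_surjective x
    rw [wedge2_smul_mk, wedge2_smul_mk, wedge2_smul_mk, mul_smul]
  smul_zero g := by
    have h := wedge2_smul_mk G M g 0
    rwa [smul_zero, map_zero] at h
  smul_add g x y := by
    obtain ⟨a, rfl⟩ := (wedSpan M).mkQ_surjective x
    obtain ⟨b, rfl⟩ := (wedSpan M).mkQ_surjective y
    rw [← map_add (wedSpan M).mkQ a b, wedge2_smul_mk, wedge2_smul_mk, wedge2_smul_mk, smul_add, map_add]

variable {M} {N : Type} [AddCommGroup N]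

/-- The map `Sym²f` induced by a linear map `f`. -/
noncomputable def sym2Map (f : M →ₗ[ℤ] N) : Sym2Q M →ₗ[ℤ] Sym2Q N :=
  Submodule.mapQ _ _ (TensorProduct.map f f) (by
    refine Submodule.span_le.2 ?_
    rintro _ ⟨a, b, rfl⟩
    show TensorProduct.map f f (a ⊗ₜ[ℤ] b - b ⊗ₜ[ℤ] a) ∈ symSpan N
    rw [map_sub, TensorProduct.map_tmul, TensorProduct.map_tmul]
    exact Submodule.subset_span ⟨f a, f b, rfl⟩)

/-- The map `∧²f` induced by a linear map `f`. -/
noncomputable def wedge2Map (f : M →ₗ[ℤ] N) : Wedge2Q M →ₗ[ℤ] Wedge2Q N :=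
  Submodule.mapQ _ _ (TensorProduct.map f f) (by
    refine Submodule.span_le.2 ?_
    rintro _ ⟨a, rfl⟩
    show TensorProduct.map f f (a ⊗ₜ[ℤ] a) ∈ wedSpan N
    rw [TensorProduct.map_tmul]
    exact Submodule.subset_span ⟨f a, rfl⟩)

end Tensor

section PermMod
variable (G : Type) [Group G] (X : Type) [MulAction G X]

/-- The permutation action on `ℤ[X] = X → ℤ`. -/
instance permSMul : SMul G (X → ℤ) := ⟨fun g f x => f (g⁻¹ • x)⟩

theorem perm_smul_def (g : G) (f : X → ℤ) (x : X) : (g • f) x = f (g⁻¹ • x) := rfl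

instance permAct : DistribMulAction G (X → ℤ) where
  one_smul f := funext fun x => by rw [perm_smul_def, inv_one, one_smul]
  mul_smul g h f := funext fun x => by
    rw [perm_smul_def, perm_smul_def, perm_smul_def, mul_inv_rev, mul_smul]
  smul_zero g := rfl
  smul_add g f f' := rfl

variable [Fintype X]

/-- The augmentation kernel `A = ker(ℤ[X] → ℤ)`. -/
def augKer : AddSubgroup (X → ℤ) where
  carrier := {f | ∑ x, f x = 0}
  zero_mem' := by simp
  add_mem' := by
    intro a b ha hb
    have ha' : ∑ x, a x = 0 := ha
    have hb' : ∑ x, b x = 0 := hb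
    show ∑ x, (a x + b x) = 0
    rw [Finset.sum_add_distrib, ha', hb', add_zero]
  neg_mem' := by
    intro a ha
    have ha' : ∑ x, a x = 0 := ha
    show ∑ x, (-(a x)) = 0
    rw [Finset.sum_neg_distrib, ha', neg_zero]

theorem smul_mem_augKer (g : G) (f : X → ℤ) (hf : f ∈ augKer X) :
    g • f ∈ augKer X := by
  have hf' : ∑ x, f x = 0 := hf
  show ∑ x, f (g⁻¹ • x) = 0
  exact (Equiv.sum_comp (MulAction.toPerm (g⁻¹ : G)) f).trans hf'

instance augKerSMul : SMul G (augKer X) :=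
  ⟨fun g f => ⟨g • (f : X → ℤ), smul_mem_augKer G X g f f.2⟩⟩

theorem augKer_smul_def (g : G) (f : augKer X) :
    ((g • f : augKer X) : X → ℤ) = g • (f : X → ℤ) := rfl

instance augKerAct : DistribMulAction G (augKer X) where
  one_smul f := Subtype.ext (by rw [augKer_smul_def, one_smul])
  mul_smul g h f := Subtype.ext (by
    rw [augKer_smul_def, augKer_smul_def, augKer_smul_def, mul_smul])
  smul_zero g := Subtype.ext (by
    rw [augKer_smul_def]
    show g • (0 : X → ℤ) = 0
    rw [smul_zero])
  smul_add g f f' := Subtype.ext (by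
    show g • ((f : X → ℤ) + f') = g • (f : X → ℤ) + g • (f' : X → ℤ)
    rw [smul_add])

end PermMod

section P2sec
variable (G : Type) [Group G]

/-- The set of 2-element subsets of `X`. -/
def P2 (X : Type) [DecidableEq X] : Type := {s : Finset X // s.card = 2}

noncomputable instance (X : Type) [DecidableEq X] [Fintype X] : Fintype (P2 X) := by
  unfold P2; infer_instance

instance p2SMul (X : Type) [DecidableEq X] [MulAction G X] : SMul G (P2 X) :=
  ⟨fun g s => ⟨s.1.image (fun x => g • x), by
    rw [Finset.card_image_of_injective _ (MulAction.injective g)]; exact s.2⟩⟩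

theorem p2_smul_def (X : Type) [DecidableEq X] [MulAction G X] (g : G) (s : P2 X) :
    (g • s).1 = s.1.image (fun x => g • x) := rfl

instance p2Act (X : Type) [DecidableEq X] [MulAction G X] : MulAction G (P2 X) where
  one_smul s := Subtype.ext (by
    rw [p2_smul_def]
    simp)
  mul_smul g h s := Subtype.ext (by
    simp only [p2_smul_def, Finset.image_image]
    refine Finset.image_congr ?_
    intro x _
    exact mul_smul g h x)

end P2sec

/-- The root lattice `A_{n-1}` as an `S_n`-lattice. -/
abbrev rootLat (n : ℕ) := augKer (Fin n)


/-- The augmentation homomorphism `ℤ[X] → ℤ`. -/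
def epsHom (X : Type) [Fintype X] : (X → ℤ) →+ ℤ :=
  AddMonoidHom.mk' (fun u => ∑ x, u x) (by
    intro a b
    show ∑ x, (a x + b x) = (∑ x, a x) + ∑ x, b x
    rw [Finset.sum_add_distrib])


namespace Stmt7
open TensorProduct
set_option linter.unusedSectionVars false
set_option synthInstance.maxHeartbeats 1000000
set_option maxHeartbeats 1000000

instance {Y : Type} [DecidableEq Y] : DecidableEq (P2 Y) :=
  fun a b => decidable_of_iff (a.1 = b.1) Subtype.ext_iff.symm

variable {X : Type} [Fintype X] [DecidableEq X]

theorem sum_single (x0 : X) : ∑ x, Pi.single x0 (1:ℤ) x = 1 := by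
  simp [Pi.single_apply]

theorem decompU (u : X → ℤ) : ∑ x, u x • Pi.single x (1:ℤ) = u := by
  funext z
  simp [Pi.single_apply, Finset.sum_apply]

theorem tensor_decomp (u v : X → ℤ) :
    u ⊗ₜ[ℤ] v = ∑ x, ∑ y, (u x * v y) • (Pi.single x (1:ℤ) ⊗ₜ[ℤ] Pi.single y (1:ℤ)) := by
  conv_lhs => rw [← decompU u, ← decompU v]
  rw [sum_tmul]
  refine Finset.sum_congr rfl fun x _ => ?_
  rw [← smul_tmul', tmul_sum, Finset.smul_sum]
  refine Finset.sum_congr rfl fun y _ => ?_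
  rw [tmul_smul, smul_smul]

theorem expand {N : Type} [AddCommGroup N] (φ : Sym2Q (X → ℤ) →+ N) (u v : X → ℤ) :
    φ ((symSpan (X → ℤ)).mkQ (u ⊗ₜ[ℤ] v)) =
      ∑ x, ∑ y, (u x * v y) •
        φ ((symSpan (X → ℤ)).mkQ (Pi.single x 1 ⊗ₜ[ℤ] Pi.single y 1)) := by
  rw [tensor_decomp, map_sum, map_sum]
  refine Finset.sum_congr rfl fun x _ => ?_
  rw [map_sum, map_sum]
  refine Finset.sum_congr rfl fun y _ => ?_
  rw [map_smul, AddMonoidHom.map_zsmul]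

theorem masterM {M N : Type} [AddCommGroup M] [AddCommGroup N]
    (φ ψ : Sym2Q M →+ N)
    (h : ∀ a b : M, φ ((symSpan M).mkQ (a ⊗ₜ[ℤ] b)) = ψ ((symSpan M).mkQ (a ⊗ₜ[ℤ] b)))
    (z : Sym2Q M) : φ z = ψ z := by
  obtain ⟨w, rfl⟩ := (symSpan M).mkQ_surjective z
  induction w using TensorProduct.induction_on with
  | zero => simp
  | tmul a b => exact h a b
  | add a b ha hb => rw [map_add, map_add, map_add, ha, hb]

theorem masterU {N : Type} [AddCommGroup N] (φ ψ : Sym2Q (X → ℤ) →+ N)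
    (h : ∀ x y : X, φ ((symSpan (X → ℤ)).mkQ (Pi.single x 1 ⊗ₜ[ℤ] Pi.single y 1)) =
      ψ ((symSpan (X → ℤ)).mkQ (Pi.single x 1 ⊗ₜ[ℤ] Pi.single y 1)))
    (z : Sym2Q (X → ℤ)) : φ z = ψ z := by
  refine masterM φ ψ (fun u v => ?_) z
  rw [expand, expand]
  exact Finset.sum_congr rfl fun x _ => Finset.sum_congr rfl fun y _ => by rw [h]

theorem mk_comm {M : Type} [AddCommGroup M] (a b : M) :
    (symSpan M).mkQ (a ⊗ₜ[ℤ] b) = (symSpan M).mkQ (b ⊗ₜ[ℤ] a) := by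
  rw [Submodule.mkQ_apply, Submodule.mkQ_apply, Submodule.Quotient.eq]
  exact Submodule.subset_span ⟨a, b, rfl⟩

theorem rho_apply (ρ : Sym2Q (X → ℤ) →+ (X → ℤ))
    (hρ : ∀ x x' : X, ρ ((symSpan (X → ℤ)).mkQ (Pi.single x 1 ⊗ₜ[ℤ] Pi.single x' 1)) =
        Pi.single x 1 + Pi.single x' 1) (u v : X → ℤ) :
    ρ ((symSpan (X → ℤ)).mkQ (u ⊗ₜ[ℤ] v)) = (∑ y, v y) • u + (∑ x, u x) • v := by
  rw [expand ρ u v]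
  funext z
  simp only [Finset.sum_apply, Pi.add_apply, Pi.smul_apply, smul_eq_mul, hρ, Pi.single_apply]
  rw [Finset.sum_comm]
  simp only [mul_add, mul_ite, mul_one, mul_zero, Finset.sum_add_distrib,
    Finset.sum_ite_eq', Finset.mem_univ, if_true]
  have h1 : (∑ x : X, ∑ x1 : X, if z = x1 then u x1 * v x else 0) = ∑ x : X, u z * v x :=
    Finset.sum_congr rfl fun x _ => by rw [Finset.sum_ite_eq]; simp
  have h2 : (∑ x : X, ∑ x1 : X, if z = x then u x1 * v x else 0) = ∑ x1 : X, u x1 * v z := by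
    rw [Finset.sum_comm]
    exact Finset.sum_congr rfl fun x1 _ => by rw [Finset.sum_ite_eq]; simp
  rw [h1, h2, ← Finset.mul_sum, ← Finset.sum_mul]
  ring

noncomputable def p2fst (s : P2 X) : X := (Finset.card_eq_two.mp s.2).choose

noncomputable def p2snd (s : P2 X) : X :=
  (Finset.card_eq_two.mp s.2).choose_spec.choose

theorem p2_ne (s : P2 X) : p2fst s ≠ p2snd s :=
  (Finset.card_eq_two.mp s.2).choose_spec.choose_spec.1

theorem p2_eq (s : P2 X) : s.1 = {p2fst s, p2snd s} :=
  (Finset.card_eq_two.mp s.2).choose_spec.choose_spec.2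

theorem pair_cases {Y : Type} [DecidableEq Y] {a b c d : Y} (hab : a ≠ b)
    (h : ({a, b} : Finset Y) = {c, d}) : (a = c ∧ b = d) ∨ (a = d ∧ b = c) := by
  have ha : a ∈ ({c, d} : Finset Y) := h ▸ (by simp)
  have hb : b ∈ ({c, d} : Finset Y) := h ▸ (by simp)
  simp only [Finset.mem_insert, Finset.mem_singleton] at ha hb
  rcases ha with h1 | h1 <;> rcases hb with h2 | h2
  · exact absurd (h1.trans h2.symm) hab
  · exact Or.inl ⟨h1, h2⟩
  · exact Or.inr ⟨h1, h2⟩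
  · exact absurd (h1.trans h2.symm) hab

theorem p2_pair_cases {s : P2 X} {x y : X} (hxy : x ≠ y) (hs : s.1 = ({x, y} : Finset X)) :
    (p2fst s = x ∧ p2snd s = y) ∨ (p2fst s = y ∧ p2snd s = x) :=
  pair_cases (p2_ne s) ((p2_eq s).symm.trans hs)

/-- The off-diagonal coordinate function. -/
noncomputable def coordF (u v : X → ℤ) : P2 X → ℤ :=
  fun s => u (p2fst s) * v (p2snd s) + u (p2snd s) * v (p2fst s)

theorem coordF_pair (u v : X → ℤ) {s : P2 X} {x y : X} (hxy : x ≠ y)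
    (hs : s.1 = ({x, y} : Finset X)) :
    coordF u v s = u x * v y + u y * v x := by
  rcases p2_pair_cases hxy hs with ⟨h1, h2⟩ | ⟨h1, h2⟩ <;> unfold coordF <;>
    rw [h1, h2] <;> try ring

/-- Off-diagonal coordinates as a linear map on the symmetric square. -/
noncomputable def od : Sym2Q (X → ℤ) →ₗ[ℤ] (P2 X → ℤ) :=
  Submodule.liftQ _
    (TensorProduct.lift (LinearMap.mk₂ ℤ coordF
      (by intro a a' b; funext s; unfold coordF; simp only [Pi.add_apply]; ring)
      (by intro c a b; funext s; unfold coordF; simp only [Pi.smul_apply, smul_eq_mul]; ring)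
      (by intro a b b'; funext s; unfold coordF; simp only [Pi.add_apply]; ring)
      (by intro c a b; funext s; unfold coordF; simp only [Pi.smul_apply, smul_eq_mul]; ring)))
    (by
      rw [symSpan, Submodule.span_le]
      rintro _ ⟨a, b, rfl⟩
      simp only [SetLike.mem_coe, LinearMap.mem_ker, map_sub, TensorProduct.lift.tmul]
      funext s
      erw [map_sub]
      show coordF a b s - coordF b a s = 0
      unfold coordF; ring)

theorem od_mk (u v : X → ℤ) : od ((symSpan (X → ℤ)).mkQ (u ⊗ₜ[ℤ] v)) = coordF u v :=
  rfl

/-- Diagonal coordinates. -/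
noncomputable def diag : Sym2Q (X → ℤ) →ₗ[ℤ] (X → ℤ) :=
  Submodule.liftQ _
    (TensorProduct.lift (LinearMap.mk₂ ℤ (fun u v => fun x => u x * v x)
      (by intro a a' b; funext x; simp only [Pi.add_apply]; ring)
      (by intro c a b; funext x; simp only [Pi.smul_apply, smul_eq_mul]; ring)
      (by intro a b b'; funext x; simp only [Pi.add_apply]; ring)
      (by intro c a b; funext x; simp only [Pi.smul_apply, smul_eq_mul]; ring)))
    (by
      rw [symSpan, Submodule.span_le]
      rintro _ ⟨a, b, rfl⟩
      simp only [SetLike.mem_coe, LinearMap.mem_ker, map_sub, TensorProduct.lift.tmul]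
      funext x
      erw [map_sub]
      show a x * b x - b x * a x = 0
      ring)

theorem diag_mk (u v : X → ℤ) :
    diag ((symSpan (X → ℤ)).mkQ (u ⊗ₜ[ℤ] v)) = fun x => u x * v x :=
  rfl

/-- Reconstruction from coordinates. -/
noncomputable def Erec : ((X → ℤ) × (P2 X → ℤ)) →+ Sym2Q (X → ℤ) :=
  AddMonoidHom.mk' (fun p => (symSpan (X → ℤ)).mkQ
    (∑ x, p.1 x • (Pi.single x (1:ℤ) ⊗ₜ[ℤ] Pi.single x (1:ℤ)) +
     ∑ s, p.2 s • (Pi.single (p2fst s) (1:ℤ) ⊗ₜ[ℤ] Pi.single (p2snd s) (1:ℤ))))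
    (by
      intro p q
      rw [← map_add]
      congr 1
      simp only [Prod.fst_add, Prod.snd_add, Pi.add_apply, add_smul,
        Finset.sum_add_distrib]
      abel)

theorem Erec_apply (d : X → ℤ) (f : P2 X → ℤ) :
    Erec (d, f) = (symSpan (X → ℤ)).mkQ
      (∑ x, d x • (Pi.single x (1:ℤ) ⊗ₜ[ℤ] Pi.single x (1:ℤ)) +
       ∑ s, f s • (Pi.single (p2fst s) (1:ℤ) ⊗ₜ[ℤ] Pi.single (p2snd s) (1:ℤ))) := rfl

theorem Erec_recon (z : Sym2Q (X → ℤ)) : Erec ⟨diag z, od z⟩ = z := by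
  refine masterU (Erec.comp ((diag.toAddMonoidHom.prod od.toAddMonoidHom)))
      (AddMonoidHom.id _) (fun x y => ?_) z
  simp only [AddMonoidHom.coe_comp, Function.comp_apply, AddMonoidHom.prod_apply,
    AddMonoidHom.id_apply, LinearMap.toAddMonoidHom_coe, od_mk, diag_mk]
  by_cases hxy : x = y
  · subst hxy
    have hdiag : (fun z => (Pi.single x 1 : X → ℤ) z * (Pi.single x 1 : X → ℤ) z) = (Pi.single x 1 : X → ℤ) := by
      funext z
      rcases eq_or_ne z x with h | h <;> simp [Pi.single_apply, h]
    have key : ∀ a b : X, a ≠ b → (Pi.single x 1 : X → ℤ) a * (Pi.single x 1 : X → ℤ) b = (0:ℤ) := by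
      intro a b hab
      rcases eq_or_ne a x with h | h
      · have : b ≠ x := fun hh => hab (h.trans hh.symm)
        simp [Pi.single_apply, this]
      · simp [Pi.single_apply, h]
    have hod : coordF ((Pi.single x 1 : X → ℤ)) ((Pi.single x 1 : X → ℤ)) = 0 := by
      funext s
      simp only [Pi.zero_apply]
      unfold coordF
      rw [key _ _ (p2_ne s), key _ _ (p2_ne s).symm, add_zero]
    rw [hdiag, hod, Erec_apply]
    have h2 : (∑ s : P2 X, (0 : P2 X → ℤ) s •
        ((Pi.single (p2fst s) 1 : X → ℤ) ⊗ₜ[ℤ] (Pi.single (p2snd s) 1 : X → ℤ))) = 0 := by simp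
    have h1 : (∑ x' : X, (Pi.single x 1 : X → ℤ) x' •
        ((Pi.single x' 1 : X → ℤ) ⊗ₜ[ℤ] (Pi.single x' 1 : X → ℤ)))
        = (Pi.single x 1 : X → ℤ) ⊗ₜ[ℤ] (Pi.single x 1 : X → ℤ) := by
      rw [Finset.sum_eq_single x (fun b _ hb => by simp [Pi.single_apply, hb])
        (fun h => absurd (Finset.mem_univ x) h)]
      simp
    rw [h1, h2, add_zero]
  · -- x ≠ y
    set s0 : P2 X := ⟨{x, y}, Finset.card_pair hxy⟩ with hs0
    have hs0v : s0.1 = ({x, y} : Finset X) := rfl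
    have hdiag : (fun z => (Pi.single x 1 : X → ℤ) z * (Pi.single y 1 : X → ℤ) z) = 0 := by
      funext z
      rcases eq_or_ne z x with h | h
      · have : z ≠ y := h ▸ hxy
        simp [Pi.single_apply, this]
      · simp [Pi.single_apply, h]
    have hod : coordF ((Pi.single x 1 : X → ℤ)) ((Pi.single y 1 : X → ℤ)) = (Pi.single s0 1 : P2 X → ℤ) := by
      funext s
      by_cases hs : s = s0
      · subst hs
        rw [coordF_pair _ _ hxy hs0v]
        simp [Pi.single_apply, hxy, Ne.symm hxy]
      · have h1 : (Pi.single x 1 : X → ℤ) (p2fst s) * (Pi.single y 1 : X → ℤ) (p2snd s) = 0 := by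
          rcases eq_or_ne (p2fst s) x with h | h
          · rcases eq_or_ne (p2snd s) y with h' | h'
            · exact absurd (Subtype.ext (by rw [p2_eq s, h, h'])) hs
            · simp [Pi.single_apply, h']
          · simp [Pi.single_apply, h]
        have h2 : (Pi.single x 1 : X → ℤ) (p2snd s) * (Pi.single y 1 : X → ℤ) (p2fst s) = 0 := by
          rcases eq_or_ne (p2snd s) x with h | h
          · rcases eq_or_ne (p2fst s) y with h' | h'
            · refine absurd (Subtype.ext ?_) hs
              rw [p2_eq s, h, h', hs0v, Finset.pair_comm]
            · simp [Pi.single_apply, h']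
          · simp [Pi.single_apply, h]
        show coordF _ _ s = _
        unfold coordF
        rw [h1, h2, add_zero, Pi.single_apply, if_neg hs]
    rw [hdiag, hod, Erec_apply]
    have h1 : (∑ x' : X, (0 : X → ℤ) x' •
        ((Pi.single x' 1 : X → ℤ) ⊗ₜ[ℤ] (Pi.single x' 1 : X → ℤ))) = 0 := by simp
    have h2 : (∑ s : P2 X, (Pi.single s0 1 : P2 X → ℤ) s •
        ((Pi.single (p2fst s) 1 : X → ℤ) ⊗ₜ[ℤ] (Pi.single (p2snd s) 1 : X → ℤ)))
        = (Pi.single (p2fst s0) 1 : X → ℤ) ⊗ₜ[ℤ] Pi.single (p2snd s0) (1:ℤ) := by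
      rw [Finset.sum_eq_single s0 (fun b _ hb => by simp [Pi.single_apply, hb])
        (fun h => absurd (Finset.mem_univ s0) h)]
      simp
    rw [h1, h2, zero_add]
    rcases p2_pair_cases hxy hs0v with ⟨hf, hsn⟩ | ⟨hf, hsn⟩
    · rw [hf, hsn]
    · rw [hf, hsn, mk_comm]

theorem coords_inj {z : Sym2Q (X → ℤ)} (hd : diag z = 0) (ho : od z = 0) : z = 0 := by
  have := Erec_recon z
  rw [hd, ho] at this
  rw [← this]
  exact map_zero Erec

theorem eps_apply (u : X → ℤ) : epsHom X u = ∑ x, u x := rfl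

theorem augKer_sum {u : X → ℤ} (hu : u ∈ augKer X) : ∑ x, u x = 0 := hu

theorem mem_augKer {u : X → ℤ} (hu : ∑ x, u x = 0) : u ∈ augKer X := hu

/-- The inclusion Sym²A → Sym²U. -/
noncomputable abbrev jmap : Sym2Q (augKer X) →ₗ[ℤ] Sym2Q (X → ℤ) :=
  sym2Map ((augKer X).subtype.toIntLinearMap)

theorem jmap_mk (a b : augKer X) :
    jmap ((symSpan (augKer X)).mkQ (a ⊗ₜ[ℤ] b)) =
      (symSpan (X → ℤ)).mkQ ((a : X → ℤ) ⊗ₜ[ℤ] (b : X → ℤ)) := by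
  show sym2Map _ (Submodule.Quotient.mk _) = _
  unfold sym2Map
  erw [Submodule.mapQ_apply, TensorProduct.map_tmul]

theorem sym2q_empty [IsEmpty X] (z : Sym2Q (X → ℤ)) : z = 0 := by
  obtain ⟨w, rfl⟩ := (symSpan (X → ℤ)).mkQ_surjective z
  induction w using TensorProduct.induction_on with
  | zero => simp
  | tmul u v =>
    have : u = 0 := funext fun x => isEmptyElim x
    rw [this, zero_tmul, map_zero]
  | add a b ha hb => rw [map_add, ha, hb, add_zero]

theorem pi_empty_zero [IsEmpty X] (u : X → ℤ) : u = 0 := funext fun x => isEmptyElim x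

/-- The projection of `u` to the augmentation kernel relative to a basepoint. -/
noncomputable def aPart (x0 : X) (u : X → ℤ) : augKer X :=
  ⟨u - (∑ x, u x) • (Pi.single x0 1 : X → ℤ), by
    refine mem_augKer ?_
    simp only [Pi.sub_apply, Pi.smul_apply, smul_eq_mul, Finset.sum_sub_distrib,
      ← Finset.mul_sum, sum_single, mul_one, sub_self]⟩

theorem aPart_val (x0 : X) (u : X → ℤ) :
    (aPart x0 u : X → ℤ) = u - (∑ x, u x) • (Pi.single x0 1 : X → ℤ) := rfl

theorem exists_decomp (x0 : X) (z : Sym2Q (X → ℤ)) :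
    ∃ (t : Sym2Q (augKer X)) (a : augKer X) (n : ℤ),
      z = jmap t + (symSpan (X → ℤ)).mkQ ((a : X → ℤ) ⊗ₜ[ℤ] Pi.single x0 1)
          + n • (symSpan (X → ℤ)).mkQ ((Pi.single x0 1 : X → ℤ) ⊗ₜ[ℤ] Pi.single x0 1) := by
  obtain ⟨w, rfl⟩ := (symSpan (X → ℤ)).mkQ_surjective z
  induction w using TensorProduct.induction_on with
  | zero => exact ⟨0, 0, 0, by simp⟩
  | add a b ha hb =>
    obtain ⟨t1, a1, n1, h1⟩ := ha
    obtain ⟨t2, a2, n2, h2⟩ := hb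
    refine ⟨t1 + t2, a1 + a2, n1 + n2, ?_⟩
    rw [map_add, h1, h2, map_add]
    have hc : ((a1 + a2 : augKer X) : X → ℤ) ⊗ₜ[ℤ] (Pi.single x0 1 : X → ℤ)
        = (a1 : X → ℤ) ⊗ₜ[ℤ] Pi.single x0 1 + (a2 : X → ℤ) ⊗ₜ[ℤ] Pi.single x0 1 := by
      rw [AddSubgroup.coe_add, add_tmul]
    rw [hc, map_add, add_smul]
    abel
  | tmul u v =>
    refine ⟨(symSpan (augKer X)).mkQ (aPart x0 u ⊗ₜ[ℤ] aPart x0 v),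
      (∑ y, v y) • aPart x0 u + (∑ x, u x) • aPart x0 v, (∑ x, u x) * (∑ y, v y), ?_⟩
    rw [jmap_mk]
    have hco : (((∑ y, v y) • aPart x0 u + (∑ x, u x) • aPart x0 v : augKer X) : X → ℤ)
        = (∑ y, v y) • (aPart x0 u : X → ℤ) + (∑ x, u x) • (aPart x0 v : X → ℤ) := rfl
    have hu : u = (aPart x0 u : X → ℤ) + (∑ x, u x) • Pi.single x0 1 := by
      rw [aPart_val, sub_add_cancel]
    have hv : v = (aPart x0 v : X → ℤ) + (∑ y, v y) • Pi.single x0 1 := by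
      rw [aPart_val, sub_add_cancel]
    conv_lhs => rw [hu, hv]
    rw [add_tmul, tmul_add, tmul_add, tmul_smul, tmul_smul, ← smul_tmul', ← smul_tmul']
    rw [smul_smul]
    rw [hco, add_tmul, ← smul_tmul', ← smul_tmul']
    simp only [map_add, map_smul]
    rw [← tmul_smul (∑ x, u x) (Pi.single x0 1 : X → ℤ) (aPart x0 v : X → ℤ),
      mk_comm ((Pi.single x0 1 : X → ℤ)) ((∑ x, u x) • (aPart x0 v : X → ℤ)),
      smul_tmul' (∑ x, u x) (aPart x0 v : X → ℤ) (Pi.single x0 1 : X → ℤ),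
      mul_comm (∑ y, v y) (∑ x, u x), add_assoc, add_assoc, add_assoc]

theorem rho_j (ρ : Sym2Q (X → ℤ) →+ (X → ℤ))
    (hρ : ∀ x x' : X, ρ ((symSpan (X → ℤ)).mkQ (Pi.single x 1 ⊗ₜ[ℤ] Pi.single x' 1)) =
        Pi.single x 1 + Pi.single x' 1) (t : Sym2Q (augKer X)) : ρ (jmap t) = 0 := by
  have := masterM (ρ.comp jmap.toAddMonoidHom) 0 (fun a b => ?_) t
  · simpa using this
  simp only [AddMonoidHom.coe_comp, Function.comp_apply, LinearMap.toAddMonoidHom_coe,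
    AddMonoidHom.zero_apply]
  rw [jmap_mk, rho_apply ρ hρ, augKer_sum a.2, augKer_sum b.2, zero_smul, zero_smul, add_zero]

theorem part2 (ρ : Sym2Q (X → ℤ) →+ (X → ℤ))
    (hρ : ∀ x x' : X, ρ ((symSpan (X → ℤ)).mkQ (Pi.single x 1 ⊗ₜ[ℤ] Pi.single x' 1)) =
        Pi.single x 1 + Pi.single x' 1) :
    AddMonoidHom.ker ρ =
      ((sym2Map ((augKer X).subtype.toIntLinearMap)).toAddMonoidHom).range := by
  ext z
  simp only [AddMonoidHom.mem_ker, AddMonoidHom.mem_range, LinearMap.toAddMonoidHom_coe]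
  constructor
  · intro hz
    rcases isEmpty_or_nonempty X with hX | hX
    · exact ⟨0, by rw [map_zero, sym2q_empty z]⟩
    · obtain ⟨x0⟩ := hX
      obtain ⟨t, a, n, rfl⟩ := exists_decomp x0 z
      rw [map_add, map_add, AddMonoidHom.map_zsmul, rho_j ρ hρ t, zero_add,
        rho_apply ρ hρ, rho_apply ρ hρ] at hz
      simp only [sum_single, augKer_sum a.2, zero_smul, add_zero, one_smul] at hz
      have hsum := congrArg (fun w : X → ℤ => ∑ x, w x) hz
      simp only [Finset.sum_apply, Pi.add_apply, Pi.smul_apply, smul_eq_mul, Pi.zero_apply,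
        Finset.sum_const_zero, Finset.sum_add_distrib, ← Finset.mul_sum, sum_single,
        augKer_sum a.2, zero_add] at hsum
      have hn : n = 0 := by omega
      rw [hn, zero_smul, add_zero] at hz
      have ha : a = 0 := Subtype.ext hz
      rw [hn, ha]
      refine ⟨t, ?_⟩
      simp
  · rintro ⟨t, rfl⟩
    exact rho_j ρ hρ t

theorem part3 (ρ : Sym2Q (X → ℤ) →+ (X → ℤ))
    (hρ : ∀ x x' : X, ρ ((symSpan (X → ℤ)).mkQ (Pi.single x 1 ⊗ₜ[ℤ] Pi.single x' 1)) =
        Pi.single x 1 + Pi.single x' 1) :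
    ρ.range = AddSubgroup.comap (epsHom X) (twoSub ℤ) := by
  ext u
  simp only [AddMonoidHom.mem_range, AddSubgroup.mem_comap]
  constructor
  · rintro ⟨z, rfl⟩
    have key := masterU ((QuotientAddGroup.mk' (twoSub ℤ)).comp ((epsHom X).comp ρ)) 0
      (fun x y => ?_) z
    · simp only [AddMonoidHom.coe_comp, Function.comp_apply, AddMonoidHom.zero_apply,
        QuotientAddGroup.mk'_apply] at key
      exact (QuotientAddGroup.eq_zero_iff _).mp key
    simp only [AddMonoidHom.coe_comp, Function.comp_apply, AddMonoidHom.zero_apply,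
      QuotientAddGroup.mk'_apply, hρ]
    rw [QuotientAddGroup.eq_zero_iff]
    refine ⟨1, ?_⟩
    show (2:ℤ) • 1 = epsHom X (Pi.single x 1 + Pi.single y 1)
    rw [eps_apply]
    simp only [Pi.add_apply, Finset.sum_add_distrib, sum_single]
    norm_num
  · intro hu
    obtain ⟨k, hk⟩ := hu
    have hk' : (2:ℤ) * k = ∑ x, u x := by
      rw [← eps_apply, ← hk]
      show (2:ℤ) * k = (2:ℤ) • k
      rw [smul_eq_mul]
    rcases isEmpty_or_nonempty X with hX | hX
    · exact ⟨0, by rw [map_zero, pi_empty_zero u]⟩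
    · obtain ⟨x0⟩ := hX
      refine ⟨(symSpan (X → ℤ)).mkQ ((aPart x0 u : X → ℤ) ⊗ₜ[ℤ] Pi.single x0 1)
        + k • (symSpan (X → ℤ)).mkQ ((Pi.single x0 1 : X → ℤ) ⊗ₜ[ℤ] Pi.single x0 1), ?_⟩
      rw [map_add, AddMonoidHom.map_zsmul, rho_apply ρ hρ, rho_apply ρ hρ]
      simp only [sum_single, one_smul, augKer_sum (aPart x0 u).2, zero_smul, add_zero]
      rw [aPart_val, smul_add, ← add_smul]
      have h2 : k + k = ∑ x, u x := by omega
      rw [h2, sub_add_cancel]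

theorem smul_single {G : Type} [Group G] [MulAction G X] (g : G) (x : X) :
    g • (Pi.single x 1 : X → ℤ) = Pi.single (g • x) 1 := by
  funext z
  rw [perm_smul_def]
  simp only [Pi.single_apply]
  by_cases h : z = g • x
  · rw [if_pos (by rw [h, inv_smul_smul]), if_pos h]
  · rw [if_neg (fun hc => h (by rw [← hc, smul_inv_smul])), if_neg h]

theorem smul_mk_tmul {G : Type} [Group G] [MulAction G X] (g : G) (u v : X → ℤ) :
    g • ((symSpan (X → ℤ)).mkQ (u ⊗ₜ[ℤ] v)) = (symSpan (X → ℤ)).mkQ ((g • u) ⊗ₜ[ℤ] (g • v)) := by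
  rw [sym2_smul_mk, tsmul_def, TensorProduct.map_tmul]
  rfl

theorem part1 {G : Type} [Group G] [MulAction G X] (ρ : Sym2Q (X → ℤ) →+ (X → ℤ))
    (hρ : ∀ x x' : X, ρ ((symSpan (X → ℤ)).mkQ (Pi.single x 1 ⊗ₜ[ℤ] Pi.single x' 1)) =
        Pi.single x 1 + Pi.single x' 1) :
    IsEquivMapP G ρ := by
  intro g z
  have := masterU (ρ.comp (DistribMulAction.toAddMonoidHom (Sym2Q (X → ℤ)) g))
    ((DistribMulAction.toAddMonoidHom (X → ℤ) g).comp ρ) (fun x y => ?_) z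
  · simpa using this
  simp only [AddMonoidHom.coe_comp, Function.comp_apply, DistribMulAction.toAddMonoidHom_apply]
  rw [smul_mk_tmul, smul_single, smul_single, hρ, hρ, smul_add, smul_single, smul_single]

theorem od_single_diag (x : X) :
    od ((symSpan (X → ℤ)).mkQ ((Pi.single x 1 : X → ℤ) ⊗ₜ[ℤ] (Pi.single x 1 : X → ℤ))) = 0 := by
  rw [od_mk]
  funext s
  simp only [Pi.zero_apply]
  have key : ∀ a b : X, a ≠ b → (Pi.single x 1 : X → ℤ) a * (Pi.single x 1 : X → ℤ) b = 0 := by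
    intro a b hab
    rcases eq_or_ne a x with h | h
    · have : b ≠ x := fun hh => hab (h.trans hh.symm)
      simp [Pi.single_apply, this]
    · simp [Pi.single_apply, h]
  unfold coordF
  rw [key _ _ (p2_ne s), key _ _ (p2_ne s).symm, add_zero]

theorem od_single_off {x y : X} (hxy : x ≠ y) :
    od ((symSpan (X → ℤ)).mkQ ((Pi.single x 1 : X → ℤ) ⊗ₜ[ℤ] (Pi.single y 1 : X → ℤ)))
      = Pi.single (⟨{x, y}, Finset.card_pair hxy⟩ : P2 X) 1 := by
  rw [od_mk]
  set s0 : P2 X := ⟨{x, y}, Finset.card_pair hxy⟩ with hs0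
  have hs0v : s0.1 = ({x, y} : Finset X) := rfl
  funext s
  by_cases hs : s = s0
  · subst hs
    rw [coordF_pair _ _ hxy hs0v]
    simp [Pi.single_apply, hxy, Ne.symm hxy]
    have e : (Pi.single (⟨{x, y}, Finset.card_pair hxy⟩ : P2 X) (1:ℤ) : P2 X → ℤ)
        ⟨{x, y}, Finset.card_pair hxy⟩ = 1 := Pi.single_eq_same _ _
    exact e.symm
  · have h1 : (Pi.single x 1 : X → ℤ) (p2fst s) * (Pi.single y 1 : X → ℤ) (p2snd s) = 0 := by
      rcases eq_or_ne (p2fst s) x with h | h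
      · rcases eq_or_ne (p2snd s) y with h' | h'
        · exact absurd (Subtype.ext (by rw [p2_eq s, h, h'])) hs
        · simp [Pi.single_apply, h']
      · simp [Pi.single_apply, h]
    have h2 : (Pi.single x 1 : X → ℤ) (p2snd s) * (Pi.single y 1 : X → ℤ) (p2fst s) = 0 := by
      rcases eq_or_ne (p2snd s) x with h | h
      · rcases eq_or_ne (p2fst s) y with h' | h'
        · refine absurd (Subtype.ext ?_) hs
          rw [p2_eq s, h, h', hs0v, Finset.pair_comm]
        · simp [Pi.single_apply, h']
      · simp [Pi.single_apply, h]
    show coordF _ _ s = _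
    unfold coordF
    rw [h1, h2, add_zero]
    have e : (Pi.single (⟨{x, y}, Finset.card_pair hxy⟩ : P2 X) (1:ℤ) : P2 X → ℤ) s = 0 :=
      Pi.single_eq_of_ne hs _
    exact e.symm

/-- The canonical symmetrized product map as a linear map. -/
noncomputable def rho0 : Sym2Q (X → ℤ) →ₗ[ℤ] (X → ℤ) :=
  Submodule.liftQ _
    (TensorProduct.lift (LinearMap.mk₂ ℤ (fun u v => (∑ y, v y) • u + (∑ x, u x) • v)
      (by intro a a' b; simp only [Finset.sum_add_distrib, Pi.add_apply, add_smul]; module)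
      (by intro c a b
          simp only [Pi.smul_apply, smul_eq_mul, ← Finset.mul_sum, mul_smul]
          module)
      (by intro a b b'; simp only [Finset.sum_add_distrib, Pi.add_apply, add_smul]; module)
      (by intro c a b
          simp only [Pi.smul_apply, smul_eq_mul, ← Finset.mul_sum, mul_smul]
          module)))
    (by
      rw [symSpan, Submodule.span_le]
      rintro _ ⟨a, b, rfl⟩
      simp only [SetLike.mem_coe, LinearMap.mem_ker, map_sub, TensorProduct.lift.tmul]
      erw [LinearMap.mem_ker, map_sub]
      show ((∑ y, b y) • a + (∑ x, a x) • b) - ((∑ y, a y) • b + (∑ x, b x) • a) = 0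
      module)

theorem rho0_mk (u v : X → ℤ) :
    rho0 ((symSpan (X → ℤ)).mkQ (u ⊗ₜ[ℤ] v)) = (∑ y, v y) • u + (∑ x, u x) • v := rfl

theorem rho0_single (x x' : X) :
    rho0 ((symSpan (X → ℤ)).mkQ (Pi.single x 1 ⊗ₜ[ℤ] Pi.single x' 1)) =
      Pi.single x 1 + Pi.single x' 1 := by
  rw [rho0_mk, sum_single, sum_single, one_smul, one_smul]

theorem rho0_j (t : Sym2Q (augKer X)) : rho0 (jmap t) = 0 :=
  rho_j rho0.toAddMonoidHom rho0_single t

/-- The map ι. -/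
noncomputable def iota : Sym2Q (augKer X) →+ (P2 X → ℤ) :=
  (od.comp jmap).toAddMonoidHom

theorem iota_mk (a b : augKer X) :
    iota ((symSpan (augKer X)).mkQ (a ⊗ₜ[ℤ] b)) = coordF (a : X → ℤ) (b : X → ℤ) := by
  show od (jmap ((symSpan (augKer X)).mkQ (a ⊗ₜ[ℤ] b))) = coordF (a : X → ℤ) (b : X → ℤ)
  rw [jmap_mk, od_mk]

theorem iota_apply (t : Sym2Q (augKer X)) : iota t = od (jmap t) := rfl

/-- Difference of two basis vectors, in the augmentation kernel. -/
noncomputable def dif (x y : X) : augKer X :=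
  ⟨(Pi.single x 1 : X → ℤ) - Pi.single y 1, by
    refine mem_augKer ?_
    simp only [Pi.sub_apply, Finset.sum_sub_distrib, sum_single, sub_self]⟩

/-- Difference vector of a pair. -/
noncomputable def dvec (s : P2 X) : augKer X := dif (p2fst s) (p2snd s)

theorem dif_anti (x y : X) : dif x y = - dif y x := by
  refine Subtype.ext ?_
  show (Pi.single x 1 : X → ℤ) - Pi.single y 1 = -((Pi.single y 1 : X → ℤ) - Pi.single x 1)
  rw [neg_sub]

/-- `q` as a group hom. -/
noncomputable def qval : (P2 X → ℤ) →+ augKer X :=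
  AddMonoidHom.mk' (fun f => ∑ s, f s • dvec s)
    (by
      intro f f'
      rw [← Finset.sum_add_distrib]
      exact Finset.sum_congr rfl fun s _ => by rw [Pi.add_apply, add_smul])

noncomputable def qmap : (P2 X → ℤ) →+ ModTwo (augKer X) :=
  (QuotientAddGroup.mk' (twoSub (augKer X))).comp qval

theorem qmap_apply (f : P2 X → ℤ) :
    qmap f = QuotientAddGroup.mk (∑ s, f s • dvec s) := rfl

theorem qval_single (s : P2 X) : qval (Pi.single s 1) = dvec s := by
  show (∑ s', (Pi.single s 1 : P2 X → ℤ) s' • dvec s') = dvec s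
  rw [Finset.sum_eq_single s (fun b _ hb => by simp [Pi.single_apply, hb])
    (fun h => absurd (Finset.mem_univ s) h)]
  simp

theorem mem_twoSub {M : Type} [AddCommGroup M] {a : M} (h : ∃ c, (2:ℤ) • c = a) :
    a ∈ twoSub M := by
  obtain ⟨c, hc⟩ := h
  exact ⟨c, hc⟩

theorem mk2_eq {M : Type} [AddCommGroup M] {a b : M} (h : ∃ c, (2:ℤ) • c = a - b) :
    (QuotientAddGroup.mk a : ModTwo M) = QuotientAddGroup.mk b := by
  rw [QuotientAddGroup.eq]
  obtain ⟨c, hc⟩ := h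
  refine mem_twoSub ⟨-c, ?_⟩
  rw [smul_neg, hc, neg_sub, sub_eq_neg_add]

theorem mk2_zero {M : Type} [AddCommGroup M] {a : M} (h : ∃ c, (2:ℤ) • c = a) :
    (QuotientAddGroup.mk a : ModTwo M) = 0 :=
  (QuotientAddGroup.eq_zero_iff a).mpr (mem_twoSub h)

/-- The bridge: the value of `q∘od` agrees with `ρ` modulo `2U`. -/
theorem bridge (z : Sym2Q (X → ℤ)) :
    (QuotientAddGroup.mk ((qval (od z) : X → ℤ)) : ModTwo (X → ℤ)) =
      QuotientAddGroup.mk (rho0 z) := by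
  have := masterU
    ((QuotientAddGroup.mk' (twoSub (X → ℤ))).comp
      (((augKer X).subtype.comp qval).comp od.toAddMonoidHom))
    ((QuotientAddGroup.mk' (twoSub (X → ℤ))).comp rho0.toAddMonoidHom)
    (fun x y => ?_) z
  · simpa using this
  simp only [AddMonoidHom.coe_comp, Function.comp_apply, LinearMap.toAddMonoidHom_coe,
    QuotientAddGroup.mk'_apply, AddSubgroup.coe_subtype, rho0_single]
  by_cases hxy : x = y
  · subst hxy
    rw [od_single_diag, map_zero]
    have h0 : ((0 : augKer X) : X → ℤ) = 0 := rfl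
    rw [h0]
    exact mk2_eq ⟨-(Pi.single x 1 : X → ℤ), by abel⟩
  · rw [od_single_off hxy]
    erw [qval_single]
    set s0 : P2 X := ⟨{x, y}, Finset.card_pair hxy⟩ with hs0
    have hv : (dvec s0 : X → ℤ) = (Pi.single (p2fst s0) 1 : X → ℤ) - Pi.single (p2snd s0) 1 := rfl
    rcases p2_pair_cases hxy (rfl : s0.1 = {x, y}) with ⟨h1, h2⟩ | ⟨h1, h2⟩ <;>
      rw [hv, h1, h2]
    · exact mk2_eq ⟨-(Pi.single y 1 : X → ℤ), by abel⟩
    · exact mk2_eq ⟨-(Pi.single x 1 : X → ℤ), by abel⟩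

theorem sym2Map_mk {M N : Type} [AddCommGroup M] [AddCommGroup N] (f : M →ₗ[ℤ] N) (a b : M) :
    sym2Map f ((symSpan M).mkQ (a ⊗ₜ[ℤ] b)) = (symSpan N).mkQ (f a ⊗ₜ[ℤ] f b) := by
  show sym2Map f (Submodule.Quotient.mk _) = _
  unfold sym2Map
  erw [Submodule.mapQ_apply, TensorProduct.map_tmul]

theorem twoSub_pi_to_aug {a : augKer X} (h : (a : X → ℤ) ∈ twoSub (X → ℤ)) :
    a ∈ twoSub (augKer X) := by
  obtain ⟨c, hc⟩ := h
  have hc' : (2:ℤ) • c = (a : X → ℤ) := hc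
  have hcmem : c ∈ augKer X := by
    refine mem_augKer ?_
    have h2 := congrArg (fun w : X → ℤ => ∑ x, w x) hc'
    simp only [Finset.sum_apply, Pi.smul_apply, smul_eq_mul, ← Finset.mul_sum,
      augKer_sum a.2] at h2
    omega
  exact mem_twoSub ⟨⟨c, hcmem⟩, Subtype.ext hc'⟩

theorem qj (t : Sym2Q (augKer X)) : qmap (iota t) = 0 := by
  have hb := bridge (jmap t)
  rw [rho0_j t, ← iota_apply] at hb
  have h0 : (QuotientAddGroup.mk (0 : X → ℤ) : ModTwo (X → ℤ)) = 0 := rfl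
  rw [h0] at hb
  show QuotientAddGroup.mk (qval (iota t)) = (0 : ModTwo (augKer X))
  exact (QuotientAddGroup.eq_zero_iff _).mpr
    (twoSub_pi_to_aug ((QuotientAddGroup.eq_zero_iff _).mp hb))

theorem sym2a_empty [IsEmpty X] (t : Sym2Q (augKer X)) : t = 0 := by
  obtain ⟨w, rfl⟩ := (symSpan (augKer X)).mkQ_surjective t
  induction w using TensorProduct.induction_on with
  | zero => simp
  | tmul a b =>
    have : a = 0 := Subtype.ext (pi_empty_zero _)
    rw [this, zero_tmul, map_zero]
  | add a b ha hb => rw [map_add, ha, hb, add_zero]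

/-- Retraction of the inclusion `A → U`. -/
noncomputable def rMap (x0 : X) : (X → ℤ) →ₗ[ℤ] augKer X where
  toFun := aPart x0
  map_add' := by
    intro u v
    refine Subtype.ext ?_
    show (u + v) - (∑ x, (u + v) x) • (Pi.single x0 1 : X → ℤ)
      = ((u - (∑ x, u x) • (Pi.single x0 1 : X → ℤ))
        + (v - (∑ x, v x) • (Pi.single x0 1 : X → ℤ)))
    simp only [Pi.add_apply, Finset.sum_add_distrib, add_smul]
    abel
  map_smul' := by
    intro c u
    refine Subtype.ext ?_
    show (c • u) - (∑ x, (c • u) x) • (Pi.single x0 1 : X → ℤ)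
      = c • (u - (∑ x, u x) • (Pi.single x0 1 : X → ℤ))
    simp only [Pi.smul_apply, smul_eq_mul, ← Finset.mul_sum, smul_sub, smul_smul]

theorem jmap_inj : Function.Injective (jmap (X := X)) := by
  rcases isEmpty_or_nonempty X with hX | hX
  · intro t1 t2 _
    rw [sym2a_empty t1, sym2a_empty t2]
  · obtain ⟨x0⟩ := hX
    have hretr : ∀ t, sym2Map (rMap x0) (jmap t) = t := by
      refine masterM ((sym2Map (rMap x0)).toAddMonoidHom.comp jmap.toAddMonoidHom)
        (AddMonoidHom.id _) (fun a b => ?_)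
      show sym2Map (rMap x0) (jmap ((symSpan (augKer X)).mkQ (a ⊗ₜ[ℤ] b)))
        = (symSpan (augKer X)).mkQ (a ⊗ₜ[ℤ] b)
      rw [jmap_mk, sym2Map_mk]
      have hr : ∀ c : augKer X, rMap x0 (c : X → ℤ) = c := by
        intro c
        refine Subtype.ext ?_
        show (c : X → ℤ) - (∑ x, (c : X → ℤ) x) • (Pi.single x0 1 : X → ℤ) = (c : X → ℤ)
        rw [augKer_sum c.2, zero_smul, sub_zero]
      rw [hr, hr]
    intro t1 t2 h
    rw [← hretr t1, ← hretr t2, h]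

/-- The negated sum of off-diagonal coordinates over pairs through a point. -/
noncomputable def NS : (P2 X → ℤ) →+ (X → ℤ) :=
  AddMonoidHom.mk' (fun F x => -∑ y ∈ (Finset.univ.erase x).attach,
      F ⟨{x, (y : X)}, Finset.card_pair (Ne.symm (Finset.ne_of_mem_erase y.2))⟩)
    (by
      intro F F'
      funext x
      simp only [Pi.add_apply]
      rw [← neg_add, ← Finset.sum_add_distrib]
      rfl)

theorem NS_eval (a b : augKer X) (x : X) :
    NS (coordF (a : X → ℤ) (b : X → ℤ)) x = 2 * ((a : X → ℤ) x * (b : X → ℤ) x) := by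
  show -∑ y ∈ (Finset.univ.erase x).attach, coordF (a : X → ℤ) (b : X → ℤ) _ = _
  rw [show (∑ y ∈ (Finset.univ.erase x).attach, coordF (a : X → ℤ) (b : X → ℤ)
        ⟨{x, (y : X)}, Finset.card_pair (Ne.symm (Finset.ne_of_mem_erase y.2))⟩)
      = ∑ y ∈ (Finset.univ.erase x).attach,
          ((a : X → ℤ) x * (b : X → ℤ) (y : X) + (a : X → ℤ) (y : X) * (b : X → ℤ) x)
    from Finset.sum_congr rfl fun y _ =>
      coordF_pair _ _ (Ne.symm (Finset.ne_of_mem_erase y.2)) rfl]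
  rw [Finset.sum_attach (Finset.univ.erase x)
    (fun y => (a : X → ℤ) x * (b : X → ℤ) y + (a : X → ℤ) y * (b : X → ℤ) x)]
  rw [Finset.sum_add_distrib, ← Finset.mul_sum, ← Finset.sum_mul]
  rw [Finset.sum_erase_eq_sub (Finset.mem_univ x), Finset.sum_erase_eq_sub (Finset.mem_univ x),
    augKer_sum a.2, augKer_sum b.2]
  ring

theorem two_diag (t : Sym2Q (augKer X)) : (2:ℤ) • diag (jmap t) = NS (iota t) := by
  have := masterM (((2:ℤ) • (diag.comp jmap)).toAddMonoidHom) (NS.comp iota) (fun a b => ?_) t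
  · exact this
  show (2:ℤ) • diag (jmap ((symSpan (augKer X)).mkQ (a ⊗ₜ[ℤ] b)))
    = NS (iota ((symSpan (augKer X)).mkQ (a ⊗ₜ[ℤ] b)))
  rw [jmap_mk, iota_mk, diag_mk]
  funext x
  rw [Pi.smul_apply, smul_eq_mul, NS_eval]

theorem iota_inj : Function.Injective (iota (X := X)) := by
  refine (injective_iff_map_eq_zero iota).mpr fun t ht => ?_
  have h2 : (2:ℤ) • diag (jmap t) = 0 := by rw [two_diag, ht, map_zero]
  have hd : diag (jmap t) = 0 := by
    rcases smul_eq_zero.mp h2 with h | h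
    · norm_num at h
    · exact h
  have ho : od (jmap t) = 0 := by rw [← iota_apply, ht]
  have hz : jmap t = 0 := coords_inj hd ho
  refine jmap_inj ?_
  rw [hz, map_zero]

theorem qmap_single (s : P2 X) : qmap (Pi.single s 1) = QuotientAddGroup.mk (dvec s) := by
  show QuotientAddGroup.mk (qval (Pi.single s 1)) = _
  rw [qval_single]

theorem dvec_mk_pair {s : P2 X} {x y : X} (hxy : x ≠ y) (hs : s.1 = {x, y}) :
    (QuotientAddGroup.mk (dvec s) : ModTwo (augKer X)) = QuotientAddGroup.mk (dif x y) := by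
  rcases p2_pair_cases hxy hs with ⟨h1, h2⟩ | ⟨h1, h2⟩
  · have h : dvec s = dif x y := by unfold dvec; rw [h1, h2]
    rw [h]
  · have h : dvec s = dif y x := by unfold dvec; rw [h1, h2]
    rw [h]
    refine mk2_eq ⟨dif y x, ?_⟩
    rw [dif_anti x y, sub_neg_eq_add, two_smul]

theorem qmap_surj : Function.Surjective (qmap (X := X)) := by
  intro m
  obtain ⟨a, rfl⟩ := QuotientAddGroup.mk_surjective m
  suffices h : (QuotientAddGroup.mk a : ModTwo (augKer X)) ∈ qmap.range from
    AddMonoidHom.mem_range.mp h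
  rcases isEmpty_or_nonempty X with hX | hX
  · have h0 : a = 0 := Subtype.ext (pi_empty_zero _)
    rw [h0, QuotientAddGroup.mk_zero]
    exact zero_mem _
  · obtain ⟨x0⟩ := hX
    have ha : a = ∑ z, (a : X → ℤ) z • dif z x0 := by
      refine Subtype.ext ?_
      have hcoe : ((∑ z, (a : X → ℤ) z • dif z x0 : augKer X) : X → ℤ)
          = ∑ z, (a : X → ℤ) z • ((dif z x0 : augKer X) : X → ℤ) := by
        rw [show ((∑ z, (a : X → ℤ) z • dif z x0 : augKer X) : X → ℤ)
            = (augKer X).subtype (∑ z, (a : X → ℤ) z • dif z x0) from rfl, map_sum]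
        exact Finset.sum_congr rfl fun z _ => AddMonoidHom.map_zsmul _ _ _
      rw [hcoe]
      funext w
      rw [Finset.sum_apply]
      have hterm : ∀ z : X, ((a : X → ℤ) z • ((dif z x0 : augKer X) : X → ℤ)) w
          = (a : X → ℤ) z * ((Pi.single z 1 : X → ℤ) w - (Pi.single x0 1 : X → ℤ) w) := by
        intro z; rfl
      simp only [hterm, mul_sub, Finset.sum_sub_distrib, Pi.single_apply, mul_ite, mul_one,
        mul_zero, Finset.sum_ite_eq, Finset.mem_univ, if_true, ← Finset.sum_mul,
        augKer_sum a.2, zero_mul, sub_zero]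
      rcases eq_or_ne w x0 with h | h
      · subst h
        simp [augKer_sum a.2]
      · simp [h]
    rw [ha]
    have hmk : (QuotientAddGroup.mk (∑ z, (a : X → ℤ) z • dif z x0) : ModTwo (augKer X))
        = ∑ z, (a : X → ℤ) z • (QuotientAddGroup.mk (dif z x0) : ModTwo (augKer X)) := by
      rw [show (QuotientAddGroup.mk (∑ z, (a : X → ℤ) z • dif z x0) : ModTwo (augKer X))
          = QuotientAddGroup.mk' (twoSub (augKer X)) (∑ z, (a : X → ℤ) z • dif z x0) from rfl,
        map_sum]
      exact Finset.sum_congr rfl fun z _ => AddMonoidHom.map_zsmul _ _ _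
    rw [hmk]
    refine AddSubgroup.sum_mem _ fun z _ => AddSubgroup.zsmul_mem _ ?_ _
    rcases eq_or_ne z x0 with rfl | hz
    · have h0 : dif z z = 0 := Subtype.ext (sub_self _)
      rw [h0, QuotientAddGroup.mk_zero]
      exact zero_mem _
    · refine AddMonoidHom.mem_range.mpr
        ⟨Pi.single (⟨{z, x0}, Finset.card_pair hz⟩ : P2 X) 1, ?_⟩
      erw [qmap_single]
      exact dvec_mk_pair hz rfl

theorem dvec_smul {G : Type} [Group G] [MulAction G X] (g : G) (s : P2 X) :
    ∃ c : augKer X, (2:ℤ) • c = dvec (g • s) - g • dvec s := by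
  have hco : ((g • dvec s : augKer X) : X → ℤ)
      = (Pi.single (g • p2fst s) 1 : X → ℤ) - Pi.single (g • p2snd s) 1 := by
    rw [augKer_smul_def]
    show g • ((Pi.single (p2fst s) 1 : X → ℤ) - Pi.single (p2snd s) 1) = _
    rw [smul_sub, smul_single, smul_single]
  have hset : (g • s : P2 X).1 = {g • p2fst s, g • p2snd s} := by
    rw [p2_smul_def, p2_eq s, Finset.image_insert, Finset.image_singleton]
  have hne : g • p2fst s ≠ g • p2snd s := (MulAction.injective g).ne (p2_ne s)
  rcases p2_pair_cases hne hset with ⟨h1, h2⟩ | ⟨h1, h2⟩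
  · refine ⟨0, ?_⟩
    rw [smul_zero]
    have h : dvec (g • s) = g • dvec s := by
      refine Subtype.ext ?_
      rw [hco]
      show (Pi.single (p2fst (g • s)) 1 : X → ℤ) - Pi.single (p2snd (g • s)) 1 = _
      rw [h1, h2]
    rw [h, sub_self]
  · refine ⟨-(g • dvec s), ?_⟩
    have h : dvec (g • s) = -(g • dvec s) := by
      refine Subtype.ext ?_
      show (Pi.single (p2fst (g • s)) 1 : X → ℤ) - Pi.single (p2snd (g • s)) 1 = _
      rw [h1, h2, show ((-(g • dvec s) : augKer X) : X → ℤ)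
        = -((g • dvec s : augKer X) : X → ℤ) from rfl, hco, neg_sub]
    rw [h, two_smul]
    abel

theorem qmap_equiv {G : Type} [Group G] [MulAction G X] : IsEquivMapP G (qmap (X := X)) := by
  intro g f
  show QuotientAddGroup.mk (qval (g • f)) = g • QuotientAddGroup.mk (qval f)
  rw [modTwo_smul_mk]
  have hval : qval (g • f) = ∑ s, f s • dvec (g • s) := by
    show (∑ s, (g • f) s • dvec s) = _
    rw [← Equiv.sum_comp (MulAction.toPerm g) (fun s => (g • f) s • dvec s)]
    refine Finset.sum_congr rfl fun s _ => ?_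
    have h1 : (g • f) (MulAction.toPerm g s) = f s := by
      show (g • f) (g • s) = f s
      rw [perm_smul_def, inv_smul_smul]
    rw [h1, MulAction.toPerm_apply]
  have hgv : (g • qval f : augKer X) = ∑ s, f s • (g • dvec s) := by
    show g • (∑ s, f s • dvec s) = _
    rw [show (g • (∑ s, f s • dvec s) : augKer X)
      = DistribMulAction.toAddMonoidHom (augKer X) g (∑ s, f s • dvec s) from rfl, map_sum]
    exact Finset.sum_congr rfl fun s _ =>
      (DistribMulAction.toAddMonoidHom (augKer X) g).map_zsmul _ _
  rw [hval, hgv]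
  choose c hc using fun s : P2 X => dvec_smul (X := X) g s
  refine mk2_eq ⟨∑ s, f s • c s, ?_⟩
  rw [Finset.smul_sum, ← Finset.sum_sub_distrib]
  refine Finset.sum_congr rfl fun s _ => ?_
  rw [smul_comm (2:ℤ) (f s), hc s, smul_sub]

theorem smul_mk_tmulA {G : Type} [Group G] [MulAction G X] (g : G) (a b : augKer X) :
    g • ((symSpan (augKer X)).mkQ (a ⊗ₜ[ℤ] b))
      = (symSpan (augKer X)).mkQ ((g • a) ⊗ₜ[ℤ] (g • b)) := by
  rw [sym2_smul_mk, tsmul_def, TensorProduct.map_tmul]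
  rfl

theorem iota_equiv {G : Type} [Group G] [MulAction G X] : IsEquivMapP G (iota (X := X)) := by
  intro g t
  have := masterM (iota.comp (DistribMulAction.toAddMonoidHom (Sym2Q (augKer X)) g))
    ((DistribMulAction.toAddMonoidHom (P2 X → ℤ) g).comp iota) (fun a b => ?_) t
  · simpa using this
  simp only [AddMonoidHom.coe_comp, Function.comp_apply, DistribMulAction.toAddMonoidHom_apply]
  rw [smul_mk_tmulA, iota_mk, iota_mk]
  funext s
  rw [perm_smul_def]
  have h1 : (g⁻¹ • s : P2 X).1 = {g⁻¹ • p2fst s, g⁻¹ • p2snd s} := by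
    rw [p2_smul_def, p2_eq s, Finset.image_insert, Finset.image_singleton]
  rw [coordF_pair _ _ ((MulAction.injective (g⁻¹ : G)).ne (p2_ne s)) h1]
  show coordF ((g • a : augKer X) : X → ℤ) ((g • b : augKer X) : X → ℤ) s = _
  unfold coordF
  rw [augKer_smul_def, augKer_smul_def]
  simp only [perm_smul_def]

theorem dif_val (z x0 w : X) : ((dif z x0 : augKer X) : X → ℤ) w
    = (if w = z then 1 else 0) - (if w = x0 then 1 else 0) := by
  show ((Pi.single z 1 : X → ℤ) - (Pi.single x0 1 : X → ℤ)) w = _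
  rw [Pi.sub_apply, Pi.single_apply, Pi.single_apply]

theorem mem_fst (s : P2 X) : p2fst s ∈ s.1 := by
  rw [p2_eq s]; exact Finset.mem_insert_self _ _

theorem mem_snd (s : P2 X) : p2snd s ∈ s.1 := by
  rw [p2_eq s]; exact Finset.mem_insert_of_mem (Finset.mem_singleton_self _)

theorem qval_coe_apply (f : P2 X → ℤ) (z : X) :
    ((qval f : augKer X) : X → ℤ) z = ∑ s, f s * ((dvec s : augKer X) : X → ℤ) z := by
  have h1 : ((qval f : augKer X) : X → ℤ) = ∑ s, f s • ((dvec s : augKer X) : X → ℤ) := by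
    show (augKer X).subtype (∑ s, f s • dvec s) = _
    rw [map_sum]
    exact Finset.sum_congr rfl fun s _ => AddMonoidHom.map_zsmul _ _ _
  rw [h1, Finset.sum_apply]
  rfl

theorem p2_eq_of_mem {s : P2 X} {x0 z : X} (hx0 : x0 ∈ s.1) (hz : z ∈ s.1) (hne : x0 ≠ z) :
    s = (⟨{x0, z}, Finset.card_pair hne⟩ : P2 X) := by
  refine Subtype.ext ?_
  refine (Finset.eq_of_subset_of_card_le ?_ ?_).symm
  · intro w hw
    simp only [Finset.mem_insert, Finset.mem_singleton] at hw
    rcases hw with rfl | rfl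
    · exact hx0
    · exact hz
  · rw [s.2, Finset.card_pair hne]

theorem ker_sub_range (f : P2 X → ℤ) (hf : qmap f = 0) : ∃ t, iota t = f := by
  rcases isEmpty_or_nonempty X with hX | hX
  · have hP : IsEmpty (P2 X) := by
      refine ⟨fun s => ?_⟩
      have h1 := s.2
      have h2 : s.1 = ∅ := Finset.eq_empty_of_forall_notMem (fun x _ => isEmptyElim x)
      rw [h2] at h1
      simp at h1
    haveI := hP
    exact ⟨0, by rw [map_zero]; exact funext fun s => isEmptyElim s⟩
  obtain ⟨x0⟩ := hX
  classical
  set tau : P2 X → Sym2Q (augKer X) :=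
    fun s => (symSpan (augKer X)).mkQ (dif (p2fst s) x0 ⊗ₜ[ℤ] dif (p2snd s) x0) with htau
  set T : Sym2Q (augKer X) := ∑ s, f s • tau s with hT
  have hiotaT : iota T = ∑ s, f s •
      coordF ((dif (p2fst s) x0 : augKer X) : X → ℤ) ((dif (p2snd s) x0 : augKer X) : X → ℤ) := by
    rw [hT, map_sum]
    refine Finset.sum_congr rfl fun s _ => ?_
    rw [AddMonoidHom.map_zsmul, htau, iota_mk]
  set g : P2 X → ℤ := f - iota T with hg
  -- Claim A: g vanishes away from x0
  have claimA : ∀ s' : P2 X, x0 ∉ s'.1 → g s' = 0 := by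
    intro s' hx0
    have ha0 : p2fst s' ≠ x0 := fun h => hx0 (h ▸ mem_fst s')
    have hb0 : p2snd s' ≠ x0 := fun h => hx0 (h ▸ mem_snd s')
    have key : ∀ s : P2 X, s ≠ s' →
        coordF ((dif (p2fst s) x0 : augKer X) : X → ℤ)
          ((dif (p2snd s) x0 : augKer X) : X → ℤ) s' = 0 := by
      intro s hss
      unfold coordF
      simp only [dif_val, if_neg ha0, if_neg hb0, sub_zero]
      rcases eq_or_ne (p2fst s') (p2fst s) with h1 | h1
      · rcases eq_or_ne (p2snd s') (p2snd s) with h2 | h2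
        · exact (hss (Subtype.ext (by rw [p2_eq s, ← h1, ← h2, ← p2_eq s']))).elim
        · have h3 : p2fst s' ≠ p2snd s := fun hc => p2_ne s (h1.symm.trans hc)
          simp only [if_neg h2, if_neg h3, mul_zero, add_zero]
      · simp only [if_neg h1, zero_mul, zero_add]
        rcases eq_or_ne (p2fst s') (p2snd s) with h2 | h2
        · rcases eq_or_ne (p2snd s') (p2fst s) with h3 | h3
          · refine (hss (Subtype.ext ?_)).elim
            rw [p2_eq s, ← h2, ← h3, Finset.pair_comm, ← p2_eq s']
          · simp only [if_neg h3, zero_mul]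
        · simp only [if_neg h2, mul_zero]
    have hval : iota T s' = f s' := by
      rw [hiotaT, Finset.sum_apply]
      rw [Finset.sum_eq_single s'
        (fun s _ hs => by rw [Pi.smul_apply, smul_eq_mul, key s hs, mul_zero])
        (fun h => absurd (Finset.mem_univ s') h)]
      rw [Pi.smul_apply, smul_eq_mul]
      have hc : coordF ((dif (p2fst s') x0 : augKer X) : X → ℤ)
          ((dif (p2snd s') x0 : augKer X) : X → ℤ) s' = 1 := by
        unfold coordF
        norm_num [dif_val, if_neg ha0, if_neg hb0, p2_ne s', (p2_ne s').symm]
      rw [hc, mul_one]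
    show f s' - iota T s' = 0
    rw [hval, sub_self]
  -- Claim B: q g = 0
  have claimB : qmap g = 0 := by
    rw [hg, map_sub, hf, zero_sub, neg_eq_zero]
    exact qj T
  -- Claim C: coefficients at pairs through x0 are even
  have claimC : ∀ z : X, (hz : x0 ≠ z) →
      2 ∣ g ⟨{x0, z}, Finset.card_pair hz⟩ := by
    intro z hz
    have hmem : qval g ∈ twoSub (augKer X) := by
      refine (QuotientAddGroup.eq_zero_iff _).mp ?_
      exact claimB
    obtain ⟨k, hk⟩ := hmem
    have hk' : (2:ℤ) • k = qval g := hk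
    have hkz := congrArg (fun w : augKer X => (w : X → ℤ) z) hk'
    rw [qval_coe_apply] at hkz
    set sz : P2 X := ⟨{x0, z}, Finset.card_pair hz⟩ with hsz
    have hsum : (∑ s, g s * ((dvec s : augKer X) : X → ℤ) z)
        = g sz * ((dvec sz : augKer X) : X → ℤ) z := by
      refine Finset.sum_eq_single sz (fun s _ hs => ?_)
        (fun h => absurd (Finset.mem_univ sz) h)
      by_cases hx0s : x0 ∈ s.1
      · have hzs : z ∉ s.1 := fun hzs => hs (p2_eq_of_mem hx0s hzs hz)
        have h1 : z ≠ p2fst s := fun h => hzs (h ▸ mem_fst s)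
        have h2 : z ≠ p2snd s := fun h => hzs (h ▸ mem_snd s)
        rw [show ((dvec s : augKer X) : X → ℤ) z
          = (if z = p2fst s then 1 else 0) - (if z = p2snd s then 1 else 0) from dif_val _ _ _,
          if_neg h1, if_neg h2, sub_self, mul_zero]
      · rw [claimA s hx0s, zero_mul]
    rw [hsum] at hkz
    have hdz : ((dvec sz : augKer X) : X → ℤ) z = 1 ∨ ((dvec sz : augKer X) : X → ℤ) z = -1 := by
      rcases p2_pair_cases hz (rfl : sz.1 = {x0, z}) with ⟨h1, h2⟩ | ⟨h1, h2⟩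
      · right
        rw [show ((dvec sz : augKer X) : X → ℤ) z
          = (if z = p2fst sz then 1 else 0) - (if z = p2snd sz then 1 else 0) from dif_val _ _ _,
          h1, h2, if_neg (Ne.symm hz), if_pos rfl]
        ring
      · left
        rw [show ((dvec sz : augKer X) : X → ℤ) z
          = (if z = p2fst sz then 1 else 0) - (if z = p2snd sz then 1 else 0) from dif_val _ _ _,
          h1, h2, if_pos rfl, if_neg (Ne.symm hz)]
        ring
    have h2k : ((2:ℤ) • k : augKer X).1 z = 2 * (k : X → ℤ) z := rfl
    rw [h2k] at hkz
    rcases hdz with h | h <;> rw [h] at hkz <;> [skip; skip] <;> omega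
  -- Claim D: build the correction term
  set T' : Sym2Q (augKer X) := ∑ z ∈ (Finset.univ.erase x0).attach,
      (-(g ⟨{x0, (z : X)}, Finset.card_pair (fun h => (Finset.ne_of_mem_erase z.2) h.symm)⟩ / 2)) •
        (symSpan (augKer X)).mkQ (dif (z : X) x0 ⊗ₜ[ℤ] dif (z : X) x0) with hT'
  have hiotaT' : iota T' = ∑ z ∈ (Finset.univ.erase x0).attach,
      (-(g ⟨{x0, (z : X)}, Finset.card_pair (fun h => (Finset.ne_of_mem_erase z.2) h.symm)⟩ / 2)) •
        coordF ((dif (z : X) x0 : augKer X) : X → ℤ) ((dif (z : X) x0 : augKer X) : X → ℤ) := by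
    rw [hT', map_sum]
    refine Finset.sum_congr rfl fun z _ => ?_
    rw [AddMonoidHom.map_zsmul, iota_mk]
  have claimD : iota T' = g := by
    funext s'
    rw [hiotaT', Finset.sum_apply]
    by_cases hx0 : x0 ∈ s'.1
    · -- s' contains x0; find the other element b0
      obtain ⟨b0, hb0ne, hb0eq⟩ : ∃ b0 : X, b0 ≠ x0 ∧ s'.1 = {x0, b0} := by
        have hmem := hx0
        rw [p2_eq s'] at hmem
        simp only [Finset.mem_insert, Finset.mem_singleton] at hmem
        rcases hmem with h | h
        · refine ⟨p2snd s', fun hc => p2_ne s' (h.symm.trans hc.symm), ?_⟩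
          rw [p2_eq s', ← h]
        · refine ⟨p2fst s', fun hc => p2_ne s' (hc.trans h), ?_⟩
          rw [p2_eq s', ← h, Finset.pair_comm]
      have hx0b : x0 ≠ b0 := Ne.symm hb0ne
      have hs'eq : s' = ⟨{x0, b0}, Finset.card_pair hx0b⟩ := Subtype.ext hb0eq
      have hb0mem : b0 ∈ Finset.univ.erase x0 := Finset.mem_erase.mpr ⟨hb0ne, Finset.mem_univ _⟩
      have hval0 : ∀ z : {y // y ∈ Finset.univ.erase x0}, (z : X) ≠ b0 →
          coordF ((dif (z : X) x0 : augKer X) : X → ℤ)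
            ((dif (z : X) x0 : augKer X) : X → ℤ) s' = 0 := by
        intro z hzb
        have hb0z : b0 ≠ (z : X) := fun hc => hzb hc.symm
        have hzx0 : (z : X) ≠ x0 := Finset.ne_of_mem_erase z.2
        rcases p2_pair_cases hx0b hb0eq with ⟨h1, h2⟩ | ⟨h1, h2⟩ <;>
          · unfold coordF
            norm_num [dif_val, h1, h2, hb0z, hb0ne, Ne.symm hzx0]
      rw [Finset.sum_eq_single (⟨b0, hb0mem⟩ : {y // y ∈ Finset.univ.erase x0})
        (fun z _ hz => by
          rw [Pi.smul_apply, smul_eq_mul,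
            hval0 z (fun hc => hz (Subtype.ext hc)), mul_zero])
        (fun h => absurd (Finset.mem_attach _ _) h)]
      rw [Pi.smul_apply, smul_eq_mul]
      have hcoord : coordF ((dif b0 x0 : augKer X) : X → ℤ)
          ((dif b0 x0 : augKer X) : X → ℤ) s' = -2 := by
        rcases p2_pair_cases hx0b hb0eq with ⟨h1, h2⟩ | ⟨h1, h2⟩ <;>
        · unfold coordF
          norm_num [dif_val, h1, h2, hx0b, hb0ne]
      rw [hcoord]
      have hdvd : 2 ∣ g ⟨{x0, b0}, Finset.card_pair hx0b⟩ := claimC b0 hx0b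
      rw [hs'eq]
      have he : (g ⟨{x0, b0}, Finset.card_pair hx0b⟩ / 2) * 2
          = g ⟨{x0, b0}, Finset.card_pair hx0b⟩ := Int.ediv_mul_cancel hdvd
      rw [show (-(g ⟨{x0, b0}, Finset.card_pair hx0b⟩ / 2)) * (-2)
        = (g ⟨{x0, b0}, Finset.card_pair hx0b⟩ / 2) * 2 by ring, he]
    · -- x0 ∉ s'
      have hz0 : ∀ z : {y // y ∈ Finset.univ.erase x0},
          coordF ((dif (z : X) x0 : augKer X) : X → ℤ)
            ((dif (z : X) x0 : augKer X) : X → ℤ) s' = 0 := by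
        intro z
        have ha0 : p2fst s' ≠ x0 := fun h => hx0 (h ▸ mem_fst s')
        have hb0 : p2snd s' ≠ x0 := fun h => hx0 (h ▸ mem_snd s')
        unfold coordF
        simp only [dif_val, if_neg ha0, if_neg hb0, sub_zero]
        rcases eq_or_ne (p2fst s') (z : X) with h1 | h1
        · have h2 : p2snd s' ≠ (z : X) := fun hc => p2_ne s' (h1.trans hc.symm)
          simp only [if_neg h2, mul_zero, zero_mul, add_zero]
        · simp only [if_neg h1, zero_mul, mul_zero, add_zero]
      rw [Finset.sum_eq_zero (fun z _ => by
        rw [Pi.smul_apply, smul_eq_mul, hz0 z, mul_zero])]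
      rw [claimA s' hx0]
  refine ⟨T + T', ?_⟩
  rw [map_add, claimD, hg]
  funext s
  rw [Pi.add_apply, Pi.sub_apply]
  ring

end Stmt7


open TensorProduct in
theorem stmt_7 (G : Type) [Group G] (X : Type) [MulAction G X] [Fintype X] [DecidableEq X]
    (ρ : Sym2Q (X → ℤ) →+ (X → ℤ))
    (hρ : ∀ x x' : X, ρ ((symSpan (X → ℤ)).mkQ (Pi.single x 1 ⊗ₜ[ℤ] Pi.single x' 1)) =
        Pi.single x 1 + Pi.single x' 1) :
    IsEquivMapP G ρ ∧
    AddMonoidHom.ker ρ =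
      ((sym2Map ((augKer X).subtype.toIntLinearMap)).toAddMonoidHom).range ∧
    ρ.range = AddSubgroup.comap (epsHom X) (twoSub ℤ) ∧
    ∃ (ι : Sym2Q (augKer X) →+ (P2 X → ℤ)) (q : (P2 X → ℤ) →+ ModTwo (augKer X)),
      IsEquivMapP G ι ∧ IsEquivMapP G q ∧ Function.Injective ι ∧
      Function.Surjective q ∧ ι.range = q.ker := by
  refine ⟨Stmt7.part1 ρ hρ, Stmt7.part2 ρ hρ, Stmt7.part3 ρ hρ,
    Stmt7.iota, Stmt7.qmap, Stmt7.iota_equiv, Stmt7.qmap_equiv,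
    Stmt7.iota_inj, Stmt7.qmap_surj, ?_⟩
  ext f
  simp only [AddMonoidHom.mem_range, AddMonoidHom.mem_ker]
  constructor
  · rintro ⟨t, rfl⟩
    exact Stmt7.qj t
  · exact Stmt7.ker_sub_range f
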